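/- Suppose X and Y are geodesic metric spaces, A ⊆ X is strongly quasi-convex, φ : X → Y is a quasi-isometry, and B ⊆ Y lies at finite Hausdorff distance from φ(A). Then B is a strongly quasi-convex subset of Y. -/
import Mathlib


/-- A geodesic from `x` to `y`, parametrized by arclength on `[0, dist x y]`. -/
def IsGeodesicFrom {X : Type*} [MetricSpace X] (γ : ℝ → X) (x y : X) : Prop :=
  γ 0 = x ∧ γ (dist x y) = y ∧
    ∀ s ∈ Set.Icc (0:ℝ) (dist x y), ∀ t ∈ Set.Icc (0:ℝ) (dist x y),
      dist (γ s) (γ t) = |s - t|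

/-- A geodesic metric space. -/
def GeodesicSpace (X : Type*) [MetricSpace X] : Prop :=
  ∀ x y : X, ∃ γ : ℝ → X, IsGeodesicFrom γ x y

/-- A `(K,C)`-quasi-geodesic defined on `[0, a]`. -/
def IsQuasiGeodesicOn {X : Type*} [MetricSpace X] (K C : ℝ) (c : ℝ → X) (a : ℝ) : Prop :=
  ∀ s ∈ Set.Icc (0:ℝ) a, ∀ t ∈ Set.Icc (0:ℝ) a,
    (1 / K) * |s - t| - C ≤ dist (c s) (c t) ∧ dist (c s) (c t) ≤ K * |s - t| + C

/-- `Q` is strongly quasi-convex: for each `K ≥ 1`, `C ≥ 0` there is `M` so that every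
`(K,C)`-quasi-geodesic with endpoints in `Q` lies in the `M`-neighborhood of `Q`. -/
def StronglyQCSet {X : Type*} [MetricSpace X] (Q : Set X) : Prop :=
  ∀ K C : ℝ, 1 ≤ K → 0 ≤ C → ∃ M : ℝ,
    ∀ (c : ℝ → X) (a : ℝ), 0 ≤ a → IsQuasiGeodesicOn K C c a →
      c 0 ∈ Q → c a ∈ Q → ∀ s ∈ Set.Icc (0:ℝ) a, ∃ q ∈ Q, dist (c s) q ≤ M

/-- Strong quasi-convexity is preserved by quasi-isometries: if `A ⊆ X` is strongly
quasi-convex, `φ : X → Y` is a quasi-isometry, and `B ⊆ Y` is at finite Hausdorff distance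
from `φ(A)`, then `B` is strongly quasi-convex in `Y`. -/
theorem strongly_qc_invariant_under_qi
    {X Y : Type*} [MetricSpace X] [MetricSpace Y]
    (hX : GeodesicSpace X) (hY : GeodesicSpace Y)
    (A : Set X) (hA : StronglyQCSet A)
    (φ : X → Y) (lam eps : ℝ) (hlam : 1 ≤ lam) (heps : 0 ≤ eps)
    (hqi_lower : ∀ x x' : X, lam⁻¹ * dist x x' - eps ≤ dist (φ x) (φ x'))
    (hqi_upper : ∀ x x' : X, dist (φ x) (φ x') ≤ lam * dist x x' + eps)
    (hqi_dense : ∀ y : Y, ∃ x : X, dist y (φ x) ≤ eps)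
    (B : Set Y) (Dh : ℝ)
    (hBA : ∀ b ∈ B, ∃ a ∈ A, dist b (φ a) ≤ Dh)
    (hAB : ∀ a ∈ A, ∃ b ∈ B, dist (φ a) b ≤ Dh) :
    StronglyQCSet B := by
  classical
  intro K C hK hC
  have hlam0 : (0:ℝ) < lam := lt_of_lt_of_le one_pos hlam
  set E : ℝ := max eps Dh with hE
  have hE0 : 0 ≤ E := le_trans heps (le_max_left _ _)
  have hDhE : Dh ≤ E := le_max_right _ _
  have hepsE : eps ≤ E := le_max_left _ _
  obtain ⟨M', hM'⟩ := hA (lam * K) (lam * (C + 2*E + eps))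
    (by nlinarith) (by nlinarith)
  refine ⟨lam * M' + eps + E + Dh, ?_⟩
  intro c a ha0 hqg hc0 hca s hs
  obtain ⟨q0, hq0A, hq0⟩ := hBA _ hc0
  obtain ⟨q1, hq1A, hq1⟩ := hBA _ hca
  set c' : ℝ → X := fun t =>
    if t = 0 then q0 else if t = a then q1 else Classical.choose (hqi_dense (c t)) with hc'
  have key : ∀ t, dist (c t) (φ (c' t)) ≤ E := by
    intro t
    by_cases h0 : t = 0
    · subst h0
      simp only [hc', if_pos rfl]
      exact le_trans hq0 hDhE
    · by_cases h1 : t = a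
      · subst h1
        simp only [hc', if_neg h0, if_pos rfl]
        exact le_trans hq1 hDhE
      · simp only [hc', if_neg h0, if_neg h1]
        exact le_trans (Classical.choose_spec (hqi_dense (c t))) hepsE
  have hqg' : IsQuasiGeodesicOn (lam * K) (lam * (C + 2*E + eps)) c' a := by
    intro u hu v hv
    obtain ⟨hlow, hhigh⟩ := hqg u hu v hv
    have hdYle : dist (φ (c' u)) (φ (c' v)) ≤ dist (c u) (c v) + 2*E := by
      have h1 := key u
      have h2 := key v
      have := dist_triangle (φ (c' u)) (c u) (φ (c' v))
      have := dist_triangle (c u) (c v) (φ (c' v))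
      have e1 : dist (φ (c' u)) (c u) = dist (c u) (φ (c' u)) := dist_comm _ _
      linarith
    have hdYge : dist (c u) (c v) - 2*E ≤ dist (φ (c' u)) (φ (c' v)) := by
      have h1 := key u
      have h2 := key v
      have := dist_triangle (c u) (φ (c' u)) (c v)
      have := dist_triangle (φ (c' u)) (φ (c' v)) (c v)
      have e2 : dist (φ (c' v)) (c v) = dist (c v) (φ (c' v)) := dist_comm _ _
      linarith
    have hlo := hqi_lower (c' u) (c' v)
    have hhi := hqi_upper (c' u) (c' v)
    have hinv : lam⁻¹ * lam = 1 := inv_mul_cancel₀ (ne_of_gt hlam0)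
    constructor
    · -- lower bound
      have h1 : dist (c' u) (c' v) ≥ lam⁻¹ * ((1/K) * |u - v| - C - 2*E - eps) := by
        have : (1/K) * |u - v| - C - 2*E - eps ≤ lam * dist (c' u) (c' v) := by linarith
        have h2 : lam⁻¹ * ((1/K) * |u - v| - C - 2*E - eps)
            ≤ lam⁻¹ * (lam * dist (c' u) (c' v)) :=
          mul_le_mul_of_nonneg_left this (le_of_lt (inv_pos.mpr hlam0))
        calc lam⁻¹ * ((1/K) * |u - v| - C - 2*E - eps)
            ≤ lam⁻¹ * (lam * dist (c' u) (c' v)) := h2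
          _ = dist (c' u) (c' v) := by rw [← mul_assoc, hinv, one_mul]
      have habs : 0 ≤ |u - v| := abs_nonneg _
      have hK0 : (0:ℝ) < K := lt_of_lt_of_le one_pos hK
      have hinveq : 1 / (lam * K) = lam⁻¹ * (1/K) := by
        field_simp
      rw [hinveq]
      have hinvle : lam⁻¹ ≤ 1 := by
        rw [inv_le_one_iff₀]; right; exact hlam
      have hinvpos : 0 < lam⁻¹ := inv_pos.mpr hlam0
      nlinarith [mul_nonneg (le_of_lt hinvpos) habs]
    · -- upper bound
      have h1 : lam⁻¹ * dist (c' u) (c' v) ≤ K * |u - v| + C + 2*E + eps := by linarith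
      have h2 : dist (c' u) (c' v) ≤ lam * (K * |u - v| + C + 2*E + eps) := by
        have := mul_le_mul_of_nonneg_left h1 (le_of_lt hlam0)
        rw [← mul_assoc, mul_inv_cancel₀ (ne_of_gt hlam0), one_mul] at this
        exact this
      nlinarith
  have hc'0 : c' 0 ∈ A := by simp only [hc', if_pos rfl]; exact hq0A
  have hc'a : c' a ∈ A := by
    by_cases h0 : a = 0
    · simp only [hc', h0, if_pos rfl]; exact hq0A
    · simp only [hc', if_neg h0, if_pos rfl]; exact hq1A
  obtain ⟨q, hqA, hq⟩ := hM' c' a ha0 hqg' hc'0 hc'a s hs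
  obtain ⟨b, hbB, hb⟩ := hAB q hqA
  refine ⟨b, hbB, ?_⟩
  have h1 : dist (c s) b ≤ dist (c s) (φ (c' s)) + dist (φ (c' s)) (φ q) + dist (φ q) b :=
    dist_triangle4 _ _ _ _
  have h2 := key s
  have h3 := hqi_upper (c' s) q
  have h4 : lam * dist (c' s) q ≤ lam * M' := mul_le_mul_of_nonneg_left hq (le_of_lt hlam0)
  linarith
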